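/- Let β=(β_n)_{n∈ℕ} be a Cantor base with x_β<+∞. If a is an infinite word over ℕ with a_n∈[[0,⌈β_n⌉−1]] for all n∈ℕ and val_β(a)∈(x_β−1,x_β], then a >_lex ℓ*_β(x_β−1). -/

import Mathlib

open Filter Topology

/-- A Cantor real base: a sequence of reals `> 1` whose infinite product diverges to `+∞`. -/
structure IsCantorBase (β : ℕ → ℝ) : Prop where
  one_lt : ∀ n, 1 < β n
  prod_tendsto : Tendsto (fun N => ∏ i ∈ Finset.range N, β i) atTop atTop

/-- The product `β_0 ⋯ β_n`. -/
noncomputable def prodUpTo (β : ℕ → ℝ) (n : ℕ) : ℝ := ∏ i ∈ Finset.range (n + 1), β i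

/-- The shifted base `β^(n) = (β_n, β_{n+1}, …)`. -/
def shiftBase (β : ℕ → ℝ) (n : ℕ) : ℕ → ℝ := fun m => β (n + m)

/-- `x_β = Σ_{n} (⌈β_n⌉ - 1)/(β_0 ⋯ β_n)`. -/
noncomputable def xB (β : ℕ → ℝ) : ℝ := ∑' n, ((⌈β n⌉ : ℝ) - 1) / prodUpTo β n

/-- The condition `x_β < +∞`, i.e. the series defining `x_β` converges. -/
def XBSummable (β : ℕ → ℝ) : Prop :=
  Summable (fun n => ((⌈β n⌉ : ℝ) - 1) / prodUpTo β n)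

/-- `val_β(a) = Σ_n a_n/(β_0 ⋯ β_n)`. -/
noncomputable def valB (β : ℕ → ℝ) (a : ℕ → ℤ) : ℝ := ∑' n, (a n : ℝ) / prodUpTo β n

/-- The digit condition `a_n ∈ [[0, ⌈β_n⌉ - 1]]` for all `n`. -/
def validWord (β : ℕ → ℝ) (a : ℕ → ℤ) : Prop := ∀ n, 0 ≤ a n ∧ a n ≤ ⌈β n⌉ - 1

/-- The flip map `θ_β`. -/
noncomputable def theta (β : ℕ → ℝ) (a : ℕ → ℤ) : ℕ → ℤ := fun n => ⌈β n⌉ - 1 - a n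

/-- The greedy remainders `r_{β,n}(x)`. -/
noncomputable def greedyR (β : ℕ → ℝ) (x : ℝ) : ℕ → ℝ
  | 0 => β 0 * x - (⌊β 0 * x⌋ : ℝ)
  | n + 1 => β (n + 1) * greedyR β x n - (⌊β (n + 1) * greedyR β x n⌋ : ℝ)

/-- The greedy digits `ε_{β,n}(x)`; `greedyDigit β x` is the greedy β-expansion `d_β(x)`. -/
noncomputable def greedyDigit (β : ℕ → ℝ) (x : ℝ) : ℕ → ℤ
  | 0 => ⌊β 0 * x⌋
  | n + 1 => ⌊β (n + 1) * greedyR β x n⌋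

/-- The lazy remainders `s_{β,n}(x)`. -/
noncomputable def lazyS (β : ℕ → ℝ) (x : ℝ) : ℕ → ℝ
  | 0 => β 0 * x - (⌈β 0 * x - xB (shiftBase β 1)⌉ : ℝ)
  | n + 1 => β (n + 1) * lazyS β x n -
      (⌈β (n + 1) * lazyS β x n - xB (shiftBase β (n + 2))⌉ : ℝ)

/-- The lazy digits `ξ_{β,n}(x)`; `lazyDigit β x` is the lazy β-expansion `ℓ_β(x)`. -/
noncomputable def lazyDigit (β : ℕ → ℝ) (x : ℝ) : ℕ → ℤ
  | 0 => ⌈β 0 * x - xB (shiftBase β 1)⌉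
  | n + 1 => ⌈β (n + 1) * lazyS β x n - xB (shiftBase β (n + 2))⌉

/-- Strict lexicographic order on infinite words. -/
def lexLt (a b : ℕ → ℤ) : Prop := ∃ k, (∀ i < k, a i = b i) ∧ a k < b k

/-- Lexicographic order on infinite words. -/
def lexLe (a b : ℕ → ℤ) : Prop := lexLt a b ∨ a = b

/-- `D_β`, the set of greedy β-expansions of points of `[0,1)`. -/
def greedySet (β : ℕ → ℝ) : Set (ℕ → ℤ) :=
  {a | ∃ x ∈ Set.Ico (0 : ℝ) 1, a = greedyDigit β x}

/-- `D'_β`, the set of lazy β-expansions of points of `(x_β - 1, x_β]`. -/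
def lazySet (β : ℕ → ℝ) : Set (ℕ → ℤ) :=
  {a | ∃ x ∈ Set.Ioc (xB β - 1) (xB β), a = lazyDigit β x}

/-- `Δ'_β = ⋃_n D'_{β^(n)}`. -/
def deltaSet (β : ℕ → ℝ) : Set (ℕ → ℤ) := ⋃ n, lazySet (shiftBase β n)

section Helpers

variable {β : ℕ → ℝ}

lemma prodUpTo_pos (hone : ∀ n, 1 < β n) (n : ℕ) : 0 < prodUpTo β n :=
  Finset.prod_pos fun i _ => lt_trans zero_lt_one (hone i)

lemma prodUpTo_succ (n : ℕ) : prodUpTo β (n + 1) = prodUpTo β n * β (n + 1) :=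
  Finset.prod_range_succ β (n + 1)

lemma prodUpTo_zero : prodUpTo β 0 = β 0 := Finset.prod_range_one β

lemma shiftBase_shiftBase (m k : ℕ) :
    shiftBase (shiftBase β m) k = shiftBase β (m + k) := by
  funext i; simp only [shiftBase]; congr 1; omega

lemma shiftBase_zero : shiftBase β 0 = β := by
  funext i; simp [shiftBase]

lemma prodUpTo_shift_one (n : ℕ) :
    prodUpTo β (n + 1) = β 0 * prodUpTo (shiftBase β 1) n := by
  simp only [prodUpTo, shiftBase]
  rw [show n + 1 + 1 = 1 + (n + 1) by omega, Finset.prod_range_add]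
  simp

/-- The terms of the `xB` series. -/
noncomputable def xTerm (β : ℕ → ℝ) (n : ℕ) : ℝ := ((⌈β n⌉ : ℝ) - 1) / prodUpTo β n

lemma xTerm_nonneg (hone : ∀ n, 1 < β n) (n : ℕ) : 0 ≤ xTerm β n := by
  apply div_nonneg _ (prodUpTo_pos hone n).le
  have := Int.le_ceil (β n)
  linarith [hone n]

lemma xTerm_shift_one (hone : ∀ n, 1 < β n) (n : ℕ) :
    xTerm (shiftBase β 1) n = β 0 * xTerm β (n + 1) := by
  have h0 : β 0 ≠ 0 := by linarith [hone 0]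
  have hp : prodUpTo (shiftBase β 1) n ≠ 0 := by
    have : 0 < prodUpTo (shiftBase β 1) n :=
      prodUpTo_pos (fun k => hone (1 + k)) n
    linarith
  have hi : β (1+n) = β (n+1) := by rw [Nat.add_comm]
  simp only [xTerm, shiftBase, hi]
  rw [prodUpTo_shift_one]
  field_simp

lemma XBSummable.shift_one (hone : ∀ n, 1 < β n) (hx : XBSummable β) :
    XBSummable (shiftBase β 1) := by
  have h1 : Summable (fun n => xTerm β (n + 1)) :=
    (summable_nat_add_iff 1).2 hx
  have : Summable (fun n => β 0 * xTerm β (n + 1)) := h1.mul_left _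
  exact this.congr fun n => (xTerm_shift_one hone n).symm

lemma XBSummable.shift (hone : ∀ n, 1 < β n) (hx : XBSummable β) (m : ℕ) :
    XBSummable (shiftBase β m) := by
  induction m with
  | zero => rwa [shiftBase_zero]
  | succ k ih =>
      have := XBSummable.shift_one (β := shiftBase β k) (fun n => hone (k + n)) ih
      rwa [shiftBase_shiftBase] at this

lemma xB_shift_one (hone : ∀ n, 1 < β n) (hx : XBSummable β) :
    β 0 * xB β = ((⌈β 0⌉ : ℝ) - 1) + xB (shiftBase β 1) := by
  have h0 : (0:ℝ) < β 0 := lt_trans zero_lt_one (hone 0)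
  have hxe : xB β = xTerm β 0 + ∑' n, xTerm β (n + 1) := hx.tsum_eq_zero_add
  have h1 : xB (shiftBase β 1) = ∑' n, β 0 * xTerm β (n + 1) := by
    unfold xB
    exact tsum_congr fun n => xTerm_shift_one hone n
  rw [h1, tsum_mul_left, hxe]
  have : β 0 * xTerm β 0 = (⌈β 0⌉ : ℝ) - 1 := by
    simp only [xTerm, prodUpTo_zero]
    field_simp
  ring_nf
  rw [mul_comm (β 0)] at this ⊢
  linarith

lemma xB_nonneg (hone : ∀ n, 1 < β n) : 0 ≤ xB β :=
  tsum_nonneg (xTerm_nonneg hone)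

end Helpers
section Helpers2

variable {β : ℕ → ℝ}

lemma prodUpTo_add (m n : ℕ) :
    prodUpTo β (m + 1 + n) = prodUpTo β m * prodUpTo (shiftBase β (m + 1)) n := by
  simp only [prodUpTo, shiftBase]
  rw [show m + 1 + n + 1 = (m + 1) + (n + 1) by omega, Finset.prod_range_add]

lemma xTerm_shift (hone : ∀ n, 1 < β n) (m n : ℕ) :
    xTerm (shiftBase β (m + 1)) n = prodUpTo β m * xTerm β (m + 1 + n) := by
  have hm : prodUpTo β m ≠ 0 := (prodUpTo_pos hone m).ne'
  have hp : prodUpTo (shiftBase β (m + 1)) n ≠ 0 :=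
    (prodUpTo_pos (fun k => hone (m + 1 + k)) n).ne'
  simp only [xTerm, shiftBase]
  rw [prodUpTo_add]
  field_simp

lemma xB_shift_eq (hone : ∀ n, 1 < β n) (hx : XBSummable β) (m : ℕ) :
    xB (shiftBase β (m + 1)) =
      prodUpTo β m * (xB β - ∑ i ∈ Finset.range (m + 1), xTerm β i) := by
  have htail : Summable (fun n => xTerm β (n + (m + 1))) :=
    (summable_nat_add_iff (m + 1)).2 hx
  have hsplit : xB β = (∑ i ∈ Finset.range (m + 1), xTerm β i) +
      ∑' n, xTerm β (n + (m + 1)) := (Summable.sum_add_tsum_nat_add (m + 1) hx).symm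
  have h1 : xB (shiftBase β (m + 1)) = ∑' n, prodUpTo β m * xTerm β (m + 1 + n) :=
    tsum_congr fun n => xTerm_shift hone m n
  have h2 : ∀ n, prodUpTo β m * xTerm β (m + 1 + n) =
      prodUpTo β m * xTerm β (n + (m + 1)) := by
    intro n; rw [Nat.add_comm (m+1) n]
  rw [h1, tsum_congr h2, tsum_mul_left]
  rw [hsplit]
  ring

lemma xB_shift_nonneg (hone : ∀ n, 1 < β n) (m : ℕ) : 0 ≤ xB (shiftBase β m) :=
  xB_nonneg (fun n => hone (m + n))

/-- The recursion for shifted bases: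
`β_{n} * x^{(n)} = ⌈β_n⌉ - 1 + x^{(n+1)}`. -/
lemma xB_shift_rec (hone : ∀ n, 1 < β n) (hx : XBSummable β) (n : ℕ) :
    β n * xB (shiftBase β n) = ((⌈β n⌉ : ℝ) - 1) + xB (shiftBase β (n + 1)) := by
  have h := xB_shift_one (β := shiftBase β n)
    (fun k => hone (n + k)) (XBSummable.shift hone hx n)
  rw [shiftBase_shiftBase] at h
  simpa [shiftBase] using h

end Helpers2
section Helpers3

variable {β : ℕ → ℝ}

/-- The lazy remainders always lie in `(x^{(n+1)} - 1, x^{(n+1)}]`. -/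
lemma lazyS_mem (x : ℝ) (n : ℕ) :
    lazyS β x n ∈ Set.Ioc (xB (shiftBase β (n + 1)) - 1) (xB (shiftBase β (n + 1))) := by
  induction n with
  | zero =>
      constructor
      · have := Int.ceil_lt_add_one (β 0 * x - xB (shiftBase β 1))
        simp only [lazyS]; linarith
      · have := Int.le_ceil (β 0 * x - xB (shiftBase β 1))
        simp only [lazyS]; linarith
  | succ k _ =>
      constructor
      · have := Int.ceil_lt_add_one (β (k+1) * lazyS β x k - xB (shiftBase β (k + 2)))
        simp only [lazyS]; linarith
      · have := Int.le_ceil (β (k+1) * lazyS β x k - xB (shiftBase β (k + 2)))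
        simp only [lazyS]; linarith

/-- The finite identity `x = Σ_{i ≤ n} ξ_i/P_i + s_n/P_n`. -/
lemma lazy_finite_identity (hone : ∀ n, 1 < β n) (x : ℝ) (n : ℕ) :
    x = (∑ i ∈ Finset.range (n + 1), (lazyDigit β x i : ℝ) / prodUpTo β i) +
      lazyS β x n / prodUpTo β n := by
  induction n with
  | zero =>
      have h0 : β 0 ≠ 0 := (lt_trans zero_lt_one (hone 0)).ne'
      simp only [zero_add, Finset.sum_range_one, prodUpTo_zero, lazyS, lazyDigit]
      field_simp
      ring
  | succ k ih =>
      have hPk : prodUpTo β k ≠ 0 := (prodUpTo_pos hone k).ne'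
      have hb : β (k+1) ≠ 0 := (lt_trans zero_lt_one (hone (k+1))).ne'
      have hPk1 : prodUpTo β (k+1) = prodUpTo β k * β (k+1) := prodUpTo_succ k
      rw [Finset.sum_range_succ]
      have hs : lazyS β x (k+1) = β (k+1) * lazyS β x k - (lazyDigit β x (k+1) : ℝ) := by
        simp only [lazyS, lazyDigit]
      rw [hs, hPk1]
      have hkey : lazyS β x k / prodUpTo β k =
          (lazyDigit β x (k+1) : ℝ) / (prodUpTo β k * β (k+1)) +
          (β (k+1) * lazyS β x k - (lazyDigit β x (k+1) : ℝ)) / (prodUpTo β k * β (k+1)) := by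
        field_simp
        ring
      linarith [ih, hkey]

/-- Digit validity of the lazy expansion on `(x_β - 1, x_β]`. -/
lemma lazyDigit_valid (hone : ∀ n, 1 < β n) (hx : XBSummable β)
    {x : ℝ} (hmem : x ∈ Set.Ioc (xB β - 1) (xB β)) :
    validWord β (lazyDigit β x) := by
  intro n
  have key : ∀ m : ℕ, ∀ t : ℝ, t ∈ Set.Ioc (xB (shiftBase β m) - 1) (xB (shiftBase β m)) →
      0 ≤ ⌈β m * t - xB (shiftBase β (m + 1))⌉ ∧
      ⌈β m * t - xB (shiftBase β (m + 1))⌉ ≤ ⌈β m⌉ - 1 := by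
    intro m t ht
    have hbm : (0:ℝ) < β m := lt_trans zero_lt_one (hone m)
    have hrec := xB_shift_rec hone hx m
    constructor
    · have h1 : (-1 : ℤ) < ⌈β m * t - xB (shiftBase β (m + 1))⌉ := by
        rw [Int.lt_ceil]
        push_cast
        have hceil : β m ≤ (⌈β m⌉ : ℝ) := Int.le_ceil (β m)
        nlinarith [ht.1]
      omega
    · rw [Int.ceil_le]
      push_cast
      nlinarith [ht.2]
  cases n with
  | zero =>
      have hm0 : x ∈ Set.Ioc (xB (shiftBase β 0) - 1) (xB (shiftBase β 0)) := by
        rwa [shiftBase_zero]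
      have h := key 0 x hm0
      simp only [lazyDigit]
      exact h
  | succ k =>
      have hs := lazyS_mem (β := β) x k
      have h := key (k+1) (lazyS β x k) hs
      simp only [lazyDigit]
      exact h
end Helpers3
section Helpers4

variable {β : ℕ → ℝ}

lemma valid_term_bounds (hone : ∀ n, 1 < β n) {a : ℕ → ℤ} (ha : validWord β a) (n : ℕ) :
    0 ≤ (a n : ℝ) / prodUpTo β n ∧ (a n : ℝ) / prodUpTo β n ≤ xTerm β n := by
  have hp := prodUpTo_pos hone n
  constructor
  · apply div_nonneg _ hp.le
    exact_mod_cast (ha n).1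
  · unfold xTerm
    gcongr
    have := (ha n).2
    have : ((a n : ℝ)) ≤ ((⌈β n⌉ - 1 : ℤ) : ℝ) := by exact_mod_cast this
    push_cast at this
    linarith

lemma valid_summable (hone : ∀ n, 1 < β n) (hx : XBSummable β)
    {a : ℕ → ℤ} (ha : validWord β a) :
    Summable (fun n => (a n : ℝ) / prodUpTo β n) := by
  apply Summable.of_nonneg_of_le (fun n => (valid_term_bounds hone ha n).1)
    (fun n => (valid_term_bounds hone ha n).2) hx

/-- The tail of `valB` beyond index `k`, scaled by `P_k`, is at most `x^{(k+1)}`. -/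
lemma valid_tail_le (hone : ∀ n, 1 < β n) (hx : XBSummable β)
    {a : ℕ → ℤ} (ha : validWord β a) (k : ℕ) :
    prodUpTo β k * (∑' n, (a (n + (k + 1)) : ℝ) / prodUpTo β (n + (k + 1)))
      ≤ xB (shiftBase β (k + 1)) := by
  have hPk := prodUpTo_pos hone k
  have h1 : ∀ n, prodUpTo β k * ((a (n + (k + 1)) : ℝ) / prodUpTo β (n + (k + 1))) =
      (a (n + (k + 1)) : ℝ) / prodUpTo (shiftBase β (k + 1)) n := by
    intro n
    have hp : prodUpTo (shiftBase β (k + 1)) n ≠ 0 :=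
      (prodUpTo_pos (fun j => hone (k + 1 + j)) n).ne'
    rw [Nat.add_comm n (k+1), prodUpTo_add]
    field_simp
  rw [← tsum_mul_left, tsum_congr h1]
  have hsum2 : XBSummable (shiftBase β (k + 1)) := XBSummable.shift hone hx (k + 1)
  have hsummand : Summable (fun n => (a (n + (k + 1)) : ℝ) / prodUpTo (shiftBase β (k + 1)) n) := by
    apply Summable.of_nonneg_of_le _ _ hsum2
    · intro n
      exact div_nonneg (by exact_mod_cast (ha _).1)
        (prodUpTo_pos (fun j => hone (k + 1 + j)) n).le
    · intro n
      gcongr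
      · exact (prodUpTo_pos (fun j => hone (k + 1 + j)) n).le
      · have := (ha (n + (k + 1))).2
        have h' : ((a (n + (k+1)) : ℝ)) ≤ ((⌈β (n + (k+1))⌉ - 1 : ℤ) : ℝ) := by exact_mod_cast this
        push_cast at h'
        have hidx : shiftBase β (k + 1) n = β (n + (k + 1)) := by
          simp only [shiftBase]; congr 1; omega
        rw [hidx]
        linarith
  apply Summable.tsum_le_tsum _ hsummand hsum2
  intro n
  gcongr
  · exact (prodUpTo_pos (fun j => hone (k + 1 + j)) n).le
  · have := (ha (n + (k + 1))).2
    have h' : ((a (n + (k+1)) : ℝ)) ≤ ((⌈β (n + (k+1))⌉ - 1 : ℤ) : ℝ) := by exact_mod_cast this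
    push_cast at h'
    have hidx : shiftBase β (k + 1) n = β (n + (k + 1)) := by
      simp only [shiftBase]; congr 1; omega
    rw [hidx]
    linarith

lemma tendsto_one_div_prodUpTo (hβ : IsCantorBase β) :
    Tendsto (fun k => 1 / prodUpTo β k) atTop (𝓝 0) := by
  have h1 : Tendsto (fun k : ℕ => k + 1) atTop atTop := tendsto_add_atTop_nat 1
  have h2 : Tendsto (fun k => prodUpTo β k) atTop atTop := hβ.prod_tendsto.comp h1
  exact h2.inv_tendsto_atTop.congr (fun k => by simp [one_div])

lemma tendsto_xB_shift_div (hβ : IsCantorBase β) (hx : XBSummable β) :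
    Tendsto (fun k => xB (shiftBase β (k + 1)) / prodUpTo β k) atTop (𝓝 0) := by
  have heq : ∀ k, xB (shiftBase β (k + 1)) / prodUpTo β k =
      xB β - ∑ i ∈ Finset.range (k + 1), xTerm β i := by
    intro k
    rw [xB_shift_eq hβ.one_lt hx k]
    field_simp [(prodUpTo_pos hβ.one_lt k).ne']
  have hps : Tendsto (fun k => ∑ i ∈ Finset.range (k + 1), xTerm β i) atTop (𝓝 (xB β)) :=
    (hx.hasSum.tendsto_sum_nat).comp (tendsto_add_atTop_nat 1)
  have := Tendsto.sub (tendsto_const_nhds (x := xB β) (f := atTop)) hps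
  simpa [heq] using this

end Helpers4
section LexLemmas

lemma lexLt_asymm {a b : ℕ → ℤ} (h1 : lexLt a b) (h2 : lexLt b a) : False := by
  obtain ⟨k1, he1, hl1⟩ := h1
  obtain ⟨k2, he2, hl2⟩ := h2
  rcases lt_trichotomy k1 k2 with h | h | h
  · have := he2 k1 h; omega
  · subst h; omega
  · have := he1 k2 h; omega

lemma lexLt_trichotomy (a b : ℕ → ℤ) : lexLt a b ∨ a = b ∨ lexLt b a := by
  by_cases h : a = b
  · exact Or.inr (Or.inl h)
  · have hne : ∃ n, a n ≠ b n := Function.ne_iff.mp h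
    classical
    let k := Nat.find hne
    have hk : a k ≠ b k := Nat.find_spec hne
    have hmin : ∀ i < k, a i = b i := fun i hi => by
      by_contra hc
      exact absurd hi (not_lt.mpr (Nat.find_le hc))
    rcases lt_or_gt_of_ne hk with hlt | hgt
    · exact Or.inl ⟨k, hmin, hlt⟩
    · exact Or.inr (Or.inr ⟨k, fun i hi => (hmin i hi).symm, hgt⟩)

lemma lexLe_trans_lexLt {a b c : ℕ → ℤ} (h1 : lexLe a b) (h2 : lexLt b c) : lexLt a c := by
  rcases h1 with h1 | rfl
  · obtain ⟨k1, he1, hl1⟩ := h1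
    obtain ⟨k2, he2, hl2⟩ := h2
    rcases lt_trichotomy k1 k2 with h | h | h
    · exact ⟨k1, fun i hi => (he1 i hi).trans (he2 i (by omega)), by have := he2 k1 h; omega⟩
    · subst h; exact ⟨k1, fun i hi => (he1 i hi).trans (he2 i hi), by omega⟩
    · exact ⟨k2, fun i hi => (he1 i (by omega)).trans (he2 i hi), by have := he1 k2 h; omega⟩
  · exact h2

end LexLemmas
section Helpers6

variable {β : ℕ → ℝ}

/-- Key lemma: if `y < valB β a` then the lazy expansion of `y` is
lexicographically smaller than `a`. -/
lemma lazyDigit_lexLt (hβ : IsCantorBase β) (hx : XBSummable β) {a : ℕ → ℤ}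
    (ha : validWord β a) {y : ℝ} (hy : y < valB β a) :
    lexLt (lazyDigit β y) a := by
  have hone := hβ.one_lt
  have hsum := valid_summable hone hx ha
  rcases lexLt_trichotomy (lazyDigit β y) a with h | h | h
  · exact h
  · exfalso
    have hbound : ∀ k, valB β a - y ≤ 1 / prodUpTo β k := by
      intro k
      have hP := prodUpTo_pos hone k
      set S := ∑ i ∈ Finset.range (k + 1), (lazyDigit β y i : ℝ) / prodUpTo β i with hS
      set T := ∑' n, (a (n + (k + 1)) : ℝ) / prodUpTo β (n + (k + 1)) with hT
      have hyid := lazy_finite_identity hone y k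
      have hs1 : lazyS β y k = prodUpTo β k * (y - S) := by
        rw [← hS] at hyid
        have h' := hyid
        field_simp at h'
        linarith
      have hsm := (lazyS_mem (β := β) y k).1
      have htail := valid_tail_le hone hx ha k
      have hvb : valB β a = S + T := by
        have hsplit := (Summable.sum_add_tsum_nat_add (f := fun n => (a n : ℝ) / prodUpTo β n)
          (k + 1) hsum).symm
        have hSa : (∑ i ∈ Finset.range (k + 1), (a i : ℝ) / prodUpTo β i) = S := by
          rw [hS]
          apply Finset.sum_congr rfl
          intro i _
          rw [← h]
        rw [valB, hsplit, hSa]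
      have hmul : prodUpTo β k * (valB β a - y) < 1 := by
        have e1 : prodUpTo β k * (valB β a - y) =
            prodUpTo β k * T - lazyS β y k := by
          rw [hvb, hs1]; ring
        rw [e1]
        linarith
      rw [le_div_iff₀ hP]
      nlinarith
    have hlim := tendsto_one_div_prodUpTo hβ
    have hle : valB β a - y ≤ 0 := ge_of_tendsto' hlim hbound
    linarith
  · exfalso
    obtain ⟨k, he, hk⟩ := h
    have hP := prodUpTo_pos hone k
    set S := ∑ i ∈ Finset.range (k + 1), (lazyDigit β y i : ℝ) / prodUpTo β i with hS
    set Sa := ∑ i ∈ Finset.range (k + 1), (a i : ℝ) / prodUpTo β i with hSa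
    set T := ∑' n, (a (n + (k + 1)) : ℝ) / prodUpTo β (n + (k + 1)) with hT
    have hyid := lazy_finite_identity hone y k
    have hs1 : lazyS β y k = prodUpTo β k * (y - S) := by
      rw [← hS] at hyid
      have h' := hyid
      field_simp at h'
      linarith
    have hsm := (lazyS_mem (β := β) y k).1
    have htail := valid_tail_le hone hx ha k
    have hvb : valB β a = Sa + T :=
      (Summable.sum_add_tsum_nat_add (f := fun n => (a n : ℝ) / prodUpTo β n) (k + 1) hsum).symm
    have hdiff : Sa - S = ((a k : ℝ) - (lazyDigit β y k : ℝ)) / prodUpTo β k := by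
      rw [hSa, hS, ← Finset.sum_sub_distrib]
      rw [Finset.sum_range_succ]
      rw [Finset.sum_eq_zero, zero_add, div_sub_div_same]
      intro i hi
      rw [he i (Finset.mem_range.mp hi)]
      ring
    have hdle : (a k : ℝ) - (lazyDigit β y k : ℝ) ≤ -1 := by
      have h1 : a k + 1 ≤ lazyDigit β y k := hk
      have h2 : ((a k + 1 : ℤ) : ℝ) ≤ ((lazyDigit β y k : ℤ) : ℝ) := by exact_mod_cast h1
      push_cast at h2
      linarith
    have hm2 : prodUpTo β k * (Sa - S) = (a k : ℝ) - (lazyDigit β y k : ℝ) := by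
      rw [hdiff]
      field_simp
    nlinarith [hsm, htail, hvb, hs1, hm2, hdle,
      mul_lt_mul_of_pos_left hy hP]

/-- Value identity: `valB β (lazyDigit β x) = x` on `(x_β - 1, x_β]`. -/
lemma valB_lazyDigit (hβ : IsCantorBase β) (hx : XBSummable β) {x : ℝ}
    (hmem : x ∈ Set.Ioc (xB β - 1) (xB β)) :
    valB β (lazyDigit β x) = x := by
  have hone := hβ.one_lt
  have hval := lazyDigit_valid hone hx hmem
  have hsum := valid_summable hone hx hval
  have hfacts : ∀ k, valB β (lazyDigit β x) - x ≤ 1 / prodUpTo β k ∧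
      -(xB (shiftBase β (k + 1)) / prodUpTo β k) ≤ valB β (lazyDigit β x) - x := by
    intro k
    have hP := prodUpTo_pos hone k
    set S := ∑ i ∈ Finset.range (k + 1), (lazyDigit β x i : ℝ) / prodUpTo β i with hS
    set T := ∑' n, (lazyDigit β x (n + (k + 1)) : ℝ) / prodUpTo β (n + (k + 1)) with hT
    have hxid := lazy_finite_identity hone x k
    have hs1 : lazyS β x k = prodUpTo β k * (x - S) := by
      rw [← hS] at hxid
      have h' := hxid
      field_simp at h'
      linarith
    have hsm := lazyS_mem (β := β) x k
    have htail := valid_tail_le hone hx hval k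
    have hTnn : 0 ≤ T := by
      apply tsum_nonneg
      intro n
      exact div_nonneg (by exact_mod_cast (hval _).1) (prodUpTo_pos hone _).le
    have hvb : valB β (lazyDigit β x) = S + T :=
      (Summable.sum_add_tsum_nat_add
        (f := fun n => (lazyDigit β x n : ℝ) / prodUpTo β n) (k + 1) hsum).symm
    constructor
    · have hmul : prodUpTo β k * (valB β (lazyDigit β x) - x) < 1 := by
        have e1 : prodUpTo β k * (valB β (lazyDigit β x) - x) =
            prodUpTo β k * T - lazyS β x k := by
          rw [hvb, hs1]; ring
        rw [e1]
        linarith [hsm.1]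
      rw [le_div_iff₀ hP]
      nlinarith
    · have hmul : -(xB (shiftBase β (k + 1))) ≤
          prodUpTo β k * (valB β (lazyDigit β x) - x) := by
        have e1 : prodUpTo β k * (valB β (lazyDigit β x) - x) =
            prodUpTo β k * T - lazyS β x k := by
          rw [hvb, hs1]; ring
        rw [e1]
        nlinarith [hsm.2]
      rw [← neg_div, div_le_iff₀ hP]
      linarith [hmul, mul_comm (prodUpTo β k) (valB β (lazyDigit β x) - x)]
  have hlim1 := tendsto_one_div_prodUpTo hβ
  have hlim2 : Tendsto (fun k => -(xB (shiftBase β (k + 1)) / prodUpTo β k)) atTop (𝓝 0) := by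
    have := (tendsto_xB_shift_div hβ hx).neg
    rwa [neg_zero] at this
  have h1 : valB β (lazyDigit β x) - x ≤ 0 :=
    ge_of_tendsto' hlim1 fun k => (hfacts k).1
  have h2 : (0:ℝ) ≤ valB β (lazyDigit β x) - x :=
    le_of_tendsto' hlim2 fun k => (hfacts k).2
  linarith

end Helpers6
/-- any word with digits in `[[0,⌈β_n⌉-1]]` whose value lies in
`(x_β−1, x_β]` is lexicographically greater than `ℓ*_β(x_β−1)`. -/
theorem quasiLazy_lex_lt (β : ℕ → ℝ) (hβ : IsCantorBase β) (hx : XBSummable β)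
    (ℓstar : ℕ → ℤ)
    (hl : Tendsto (lazyDigit β) (nhdsWithin (xB β - 1) (Set.Ioi (xB β - 1))) (nhds ℓstar))
    (a : ℕ → ℤ) (ha : validWord β a)
    (hv : valB β a ∈ Set.Ioc (xB β - 1) (xB β)) :
    lexLt ℓstar a := by
  have hone := hβ.one_lt
  obtain ⟨y, hy1, hy2⟩ := exists_between hv.1
  have hymem : y ∈ Set.Ioc (xB β - 1) (xB β) := ⟨hy1, le_trans hy2.le hv.2⟩
  have hKa : lexLt (lazyDigit β y) a := lazyDigit_lexLt hβ hx ha hy2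
  have hstar : lexLe ℓstar (lazyDigit β y) := by
    rcases lexLt_trichotomy ℓstar (lazyDigit β y) with h | h | h
    · exact Or.inl h
    · exact Or.inr h
    · exfalso
      obtain ⟨k, he, hk⟩ := h
      have hptw : ∀ i, ∀ᶠ z in 𝓝[>] (xB β - 1), lazyDigit β z i = ℓstar i := by
        intro i
        have h1 := tendsto_pi_nhds.mp hl i
        rw [show (𝓝 (ℓstar i)) = pure (ℓstar i) from congrFun (nhds_discrete ℤ) _] at h1
        exact tendsto_pure.mp h1
      have hev1 : ∀ᶠ z in 𝓝[>] (xB β - 1), ∀ i ∈ Finset.range (k + 1),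
          lazyDigit β z i = ℓstar i :=
        (eventually_all_finset _).mpr fun i _ => hptw i
      have hev2 : ∀ᶠ z in 𝓝[>] (xB β - 1), z < y :=
        eventually_nhdsWithin_of_eventually_nhds (Iio_mem_nhds hy1)
      have hev3 : ∀ᶠ z in 𝓝[>] (xB β - 1), z ∈ Set.Ioi (xB β - 1) :=
        eventually_mem_nhdsWithin
      obtain ⟨z, hzd, hzlt, hzmem⟩ := (hev1.and (hev2.and hev3)).exists
      have hyval : valB β (lazyDigit β y) = y := valB_lazyDigit hβ hx hymem
      have hKz : lexLt (lazyDigit β z) (lazyDigit β y) :=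
        lazyDigit_lexLt hβ hx (lazyDigit_valid hone hx hymem) (by rw [hyval]; exact hzlt)
      have hyz : lexLt (lazyDigit β y) (lazyDigit β z) := by
        refine ⟨k, fun i hi => ?_, ?_⟩
        · rw [he i hi, ← hzd i (Finset.mem_range.mpr (by omega))]
        · rw [hzd k (Finset.mem_range.mpr (by omega))]
          exact lt_of_lt_of_eq hk rfl
      exact lexLt_asymm hyz hKz
  exact lexLe_trans_lexLt hstar hKa
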